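/- Let n ≥ 3. The set {L_h ∘ d : h ∈ Sym_n, d ∈ D_{n+1}} of maps from Sym_n to Sym_n is a subgroup of the symmetric group on the set Sym_n, and this subgroup is isomorphic to the direct product of the symmetric group Sym_{n+1} on n+1 letters by a cyclic group of order 2. -/

import Mathlib

open Fin.NatCast

theorem Equiv.Perm.inv_apply_self {α : Type*} (f : Equiv.Perm α) (x : α) : f⁻¹ (f x) = x :=
  f.symm_apply_apply x

theorem Equiv.Perm.apply_inv_self {α : Type*} (f : Equiv.Perm α) (x : α) : f (f⁻¹ x) = x :=
  f.apply_symm_apply x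

def ext0 {n : ℕ} (π : Equiv.Perm (Fin n)) : Equiv.Perm (Fin (n + 1)) where
  toFun x := Fin.cases 0 (fun t => (π t).succ) x
  invFun x := Fin.cases 0 (fun t => (π⁻¹ t).succ) x
  left_inv x := by
    cases x using Fin.cases with
    | zero => simp
    | succ t => simp
  right_inv x := by
    cases x using Fin.cases with
    | zero => simp
    | succ t => simp

theorem ext0_zero {n : ℕ} (π : Equiv.Perm (Fin n)) : ext0 π 0 = 0 := by
  simp [ext0]

theorem finRotate_pow_apply {n : ℕ} (m : ℕ) (x : Fin (n + 1)) :
    ((finRotate (n + 1)) ^ m) x = x + (m : Fin (n + 1)) := by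
  induction m with
  | zero => simp
  | succ m ih =>
      rw [pow_succ', Equiv.Perm.mul_apply, finRotate_succ_apply, ih]
      push_cast
      abel

/-- The auxiliary permutation `α^(n+1-r) ∘ [0 π] ∘ α^(π⁻¹(r))` of `{0,1,…,n}`. -/
def toricAux (n r : ℕ) (π : Equiv.Perm (Fin n)) : Equiv.Perm (Fin (n + 1)) :=
  (finRotate (n + 1)) ^ (n + 1 - r) * ext0 π *
    (finRotate (n + 1)) ^ (((ext0 π)⁻¹ (r : Fin (n + 1))) : ℕ)

theorem toricAux_apply_zero (n r : ℕ) (hr : r ≤ n) (π : Equiv.Perm (Fin n)) :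
    toricAux n r π 0 = 0 := by
  unfold toricAux
  have h : r + (n + 1 - r) = n + 1 := by omega
  rw [Equiv.Perm.mul_apply, Equiv.Perm.mul_apply, finRotate_pow_apply,
    finRotate_pow_apply, zero_add, Fin.cast_val_eq_self,
    Equiv.Perm.apply_inv_self, ← Nat.cast_add, h, Fin.natCast_self]

/-- Restriction of a permutation of `{0,1,…,n}` fixing `0` to a permutation of `{1,…,n}`. -/
def unext0 {n : ℕ} (τ : Equiv.Perm (Fin (n + 1))) (h : τ 0 = 0) : Equiv.Perm (Fin n) where
  toFun t := (τ t.succ).pred (by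
    intro hc
    exact Fin.succ_ne_zero t (τ.injective (hc.trans h.symm)))
  invFun t := (τ⁻¹ t.succ).pred (by
    intro hc
    have h' : τ⁻¹ 0 = 0 := by
      conv_lhs => rw [← h]
      exact Equiv.Perm.inv_apply_self τ 0
    exact Fin.succ_ne_zero t (τ⁻¹.injective (hc.trans h'.symm)))
  left_inv t := by
    apply Fin.succ_injective
    rw [Fin.succ_pred, Fin.succ_pred, Equiv.Perm.inv_apply_self]
  right_inv t := by
    apply Fin.succ_injective
    rw [Fin.succ_pred, Fin.succ_pred, Equiv.Perm.apply_inv_self]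

/-- The toric map `f̄_r` on `Sym_n`. -/
def toricMap (n r : ℕ) (hr : r ≤ n) (π : Equiv.Perm (Fin n)) : Equiv.Perm (Fin n) :=
  unext0 (toricAux n r π) (toricAux_apply_zero n r hr π)

/-- The reversal `w : t ↦ n+1-t` of `{1,…,n}`, in the `Fin n` encoding. -/
def wrev (n : ℕ) : Equiv.Perm (Fin n) where
  toFun t := ⟨n - 1 - t.val, by have := t.isLt; omega⟩
  invFun t := ⟨n - 1 - t.val, by have := t.isLt; omega⟩
  left_inv t := by
    have := t.isLt
    apply Fin.ext
    simp only
    omega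
  right_inv t := by
    have := t.isLt
    apply Fin.ext
    simp only
    omega

theorem wrev_wrev {n : ℕ} (t : Fin n) : wrev n (wrev n t) = t := by
  have := t.isLt
  apply Fin.ext
  simp only [wrev, Equiv.coe_fn_mk]
  omega

/-- The reverse map `g` on `Sym_n`: `g(π) = w ∘ π ∘ w`,
i.e. `(g π)(t) = n+1-π(n+1-t)` in 1-based notation. -/
def revMap {n : ℕ} (π : Equiv.Perm (Fin n)) : Equiv.Perm (Fin n) :=
  wrev n * π * wrev n

theorem revMap_revMap {n : ℕ} (π : Equiv.Perm (Fin n)) : revMap (revMap π) = π := by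
  ext t
  simp only [revMap, Equiv.Perm.mul_apply]
  rw [wrev_wrev, wrev_wrev]

theorem ext0_injective {n : ℕ} : Function.Injective (ext0 (n := n)) := by
  intro π1 π2 h
  ext t
  have h2 : ext0 π1 t.succ = ext0 π2 t.succ := by rw [h]
  simp only [ext0, Equiv.coe_fn_mk, Fin.cases_succ] at h2
  exact congrArg Fin.val (Fin.succ_injective _ h2)

theorem unext0_inj {n : ℕ} {τ1 τ2 : Equiv.Perm (Fin (n + 1))} {h1 : τ1 0 = 0}
    {h2 : τ2 0 = 0} (h : unext0 τ1 h1 = unext0 τ2 h2) : τ1 = τ2 := by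
  ext x
  cases x using Fin.cases with
  | zero => rw [h1, h2]
  | succ t =>
      have hfun : (unext0 τ1 h1) t = (unext0 τ2 h2) t := by rw [h]
      have hne1 : τ1 t.succ ≠ 0 := fun hc => Fin.succ_ne_zero t (τ1.injective (hc.trans h1.symm))
      have hne2 : τ2 t.succ ≠ 0 := fun hc => Fin.succ_ne_zero t (τ2.injective (hc.trans h2.symm))
      have e1 : ((unext0 τ1 h1) t).succ = τ1 t.succ := by
        show ((τ1 t.succ).pred hne1).succ = τ1 t.succ
        exact Fin.succ_pred _ _
      have e2 : ((unext0 τ2 h2) t).succ = τ2 t.succ := by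
        show ((τ2 t.succ).pred hne2).succ = τ2 t.succ
        exact Fin.succ_pred _ _
      rw [← e1, ← e2, hfun]

theorem toricMap_injective (n r : ℕ) (hr : r ≤ n) :
    Function.Injective (toricMap n r hr) := by
  intro π1 π2 h
  have h' : toricAux n r π1 = toricAux n r π2 := unext0_inj h
  unfold toricAux at h'
  rw [mul_assoc, mul_assoc] at h'
  have h'' := mul_left_cancel h'
  set c1 : ℕ := (((ext0 π1)⁻¹ (r : Fin (n + 1))) : ℕ) with hc1
  set c2 : ℕ := (((ext0 π2)⁻¹ (r : Fin (n + 1))) : ℕ) with hc2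
  have happ := congrArg (fun (e : Equiv.Perm (Fin (n + 1))) => e (-(c1 : Fin (n + 1)))) h''
  simp only [Equiv.Perm.mul_apply, finRotate_pow_apply] at happ
  rw [neg_add_cancel, ext0_zero] at happ
  have hz : (-(c1 : Fin (n + 1)) + (c2 : Fin (n + 1))) = 0 :=
    (ext0 π2).injective (by rw [← happ, ext0_zero])
  have hcc : (c1 : Fin (n + 1)) = (c2 : Fin (n + 1)) := by
    have := neg_add_eq_zero.mp hz
    exact this
  have hpow : (finRotate (n + 1)) ^ c1 = (finRotate (n + 1)) ^ c2 := by
    ext x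
    rw [finRotate_pow_apply, finRotate_pow_apply, hcc]
  rw [hpow] at h''
  exact ext0_injective (mul_right_cancel h'')

/-- The toric map `f̄ = f̄_1` as a permutation of the set `Sym_n`. -/
noncomputable def toricEquiv (n : ℕ) (hn : 1 ≤ n) : Equiv.Perm (Equiv.Perm (Fin n)) :=
  Equiv.ofBijective (toricMap n 1 hn)
    (Finite.injective_iff_bijective.mp (toricMap_injective n 1 hn))

/-- The reverse map `g` as a permutation of the set `Sym_n`. -/
def revEquiv (n : ℕ) : Equiv.Perm (Equiv.Perm (Fin n)) where
  toFun := revMap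
  invFun := revMap
  left_inv := revMap_revMap
  right_inv := revMap_revMap

/-- The toric-reverse group `D_{n+1}`: the group of permutations of the set `Sym_n`
generated by the toric map `f̄` and the reverse map `g`. -/
def toricReverseGroup (n : ℕ) (hn : 1 ≤ n) :
    Subgroup (Equiv.Perm (Equiv.Perm (Fin n))) :=
  Subgroup.closure {toricEquiv n hn, revEquiv n}

/-- The automorphism group of a simple graph, as a subgroup of the group of
permutations of its vertex set. -/
def graphAut {V : Type*} (G : SimpleGraph V) : Subgroup (Equiv.Perm V) where
  carrier := {e | ∀ u v, G.Adj (e u) (e v) ↔ G.Adj u v}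
  one_mem' := by intro u v; simp
  mul_mem' := by
    intro a b ha hb u v
    rw [Equiv.Perm.mul_apply, Equiv.Perm.mul_apply, ha, hb]
  inv_mem' := by
    intro a ha u v
    conv_rhs => rw [← Equiv.Perm.apply_inv_self a u, ← Equiv.Perm.apply_inv_self a v]
    rw [ha]

open Fin.CommRing

namespace Stmt9Aux

variable {n : ℕ}

theorem ext0_apply_succ (π : Equiv.Perm (Fin n)) (t : Fin n) :
    ext0 π t.succ = (π t).succ := by
  simp [ext0]

theorem ext0_mul (g h : Equiv.Perm (Fin n)) : ext0 (g * h) = ext0 g * ext0 h := by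
  ext x
  cases x using Fin.cases with
  | zero => simp [Equiv.Perm.mul_apply, ext0_zero]
  | succ t => simp [Equiv.Perm.mul_apply, ext0_apply_succ]

theorem ext0_unext0 (τ : Equiv.Perm (Fin (n + 1))) (h : τ 0 = 0) :
    ext0 (unext0 τ h) = τ := by
  apply Equiv.ext
  intro x
  cases x using Fin.cases with
  | zero => rw [ext0_zero, h]
  | succ t =>
      rw [ext0_apply_succ]
      exact Fin.succ_pred _ (fun hc => Fin.succ_ne_zero t (τ.injective (hc.trans h.symm)))

theorem unext0_congr {τ1 τ2 : Equiv.Perm (Fin (n + 1))} {h1 : τ1 0 = 0} {h2 : τ2 0 = 0}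
    (h : τ1 = τ2) : unext0 τ1 h1 = unext0 τ2 h2 := by
  subst h; rfl

theorem pow_rot_eq {a b : ℕ} (h : (a : Fin (n + 1)) = (b : Fin (n + 1))) :
    (finRotate (n + 1)) ^ a = (finRotate (n + 1)) ^ b :=
  Equiv.ext fun x => by rw [finRotate_pow_apply, finRotate_pow_apply, h]

theorem rot_pow_inv_apply (m : ℕ) (x : Fin (n + 1)) :
    ((finRotate (n + 1)) ^ m)⁻¹ x = x - m := by
  apply ((finRotate (n + 1)) ^ m).injective
  rw [Equiv.Perm.apply_inv_self, finRotate_pow_apply]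
  ring

/-- The canonical representative of the coset `τ⟨α⟩`, restricted to `Fin n`. -/
def canon (τ : Equiv.Perm (Fin (n + 1))) : Equiv.Perm (Fin n) :=
  unext0 (τ * finRotate (n + 1) ^ ((τ⁻¹ 0 : Fin (n + 1)) : ℕ)) (by
    rw [Equiv.Perm.mul_apply, finRotate_pow_apply, zero_add, Fin.cast_val_eq_self,
      Equiv.Perm.apply_inv_self])

theorem canon_spec (τ : Equiv.Perm (Fin (n + 1))) :
    ext0 (canon τ) = τ * finRotate (n + 1) ^ ((τ⁻¹ 0 : Fin (n + 1)) : ℕ) :=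
  ext0_unext0 _ _

theorem canon_mul_pow (τ : Equiv.Perm (Fin (n + 1))) (m : ℕ) :
    canon (τ * finRotate (n + 1) ^ m) = canon τ := by
  apply ext0_injective
  rw [canon_spec, canon_spec, mul_assoc, ← pow_add]
  congr 1
  apply pow_rot_eq
  have h2 : ((τ * finRotate (n + 1) ^ m)⁻¹ 0 : Fin (n + 1)) = τ⁻¹ 0 - m := by
    rw [mul_inv_rev, Equiv.Perm.mul_apply, rot_pow_inv_apply]
  rw [Nat.cast_add, Fin.cast_val_eq_self, Fin.cast_val_eq_self, h2]
  ring

theorem canon_ext0 (π : Equiv.Perm (Fin n)) : canon (ext0 π) = π := by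
  apply ext0_injective
  rw [canon_spec]
  have h0 : ((ext0 π)⁻¹ 0 : Fin (n + 1)) = 0 := by
    apply (ext0 π).injective
    rw [Equiv.Perm.apply_inv_self, ext0_zero]
  rw [h0]
  simp

theorem canon_fix0 (τ : Equiv.Perm (Fin (n + 1))) (h : τ 0 = 0) :
    canon τ = unext0 τ h := by
  apply ext0_injective
  rw [canon_spec, ext0_unext0]
  have h0 : (τ⁻¹ 0 : Fin (n + 1)) = 0 := by
    apply τ.injective
    rw [Equiv.Perm.apply_inv_self, h]
  rw [h0]
  simp

/-- The action of `Sym_{n+1}` on `Sym_n` by left multiplication on cosets. -/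
def A (σ : Equiv.Perm (Fin (n + 1))) (π : Equiv.Perm (Fin n)) : Equiv.Perm (Fin n) :=
  canon (σ * ext0 π)

theorem A_A (σ₁ σ₂ : Equiv.Perm (Fin (n + 1))) (π : Equiv.Perm (Fin n)) :
    A σ₁ (A σ₂ π) = A (σ₁ * σ₂) π := by
  unfold A
  rw [canon_spec, ← mul_assoc σ₁, canon_mul_pow, mul_assoc σ₁ σ₂]

theorem A_one (π : Equiv.Perm (Fin n)) : A 1 π = π := by
  unfold A
  rw [one_mul, canon_ext0]

/-- The homomorphism `Sym_{n+1} →* Perm(Sym_n)`. -/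
def phi : Equiv.Perm (Fin (n + 1)) →* Equiv.Perm (Equiv.Perm (Fin n)) where
  toFun σ :=
    { toFun := A σ
      invFun := A σ⁻¹
      left_inv := fun π => by rw [A_A, inv_mul_cancel, A_one]
      right_inv := fun π => by rw [A_A, mul_inv_cancel, A_one] }
  map_one' := Equiv.ext fun π => A_one π
  map_mul' := fun σ₁ σ₂ => Equiv.ext fun π => by
    show A (σ₁ * σ₂) π = A σ₁ (A σ₂ π)
    rw [A_A]

theorem phi_apply (σ : Equiv.Perm (Fin (n + 1))) (π : Equiv.Perm (Fin n)) :
    phi σ π = A σ π := rfl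

/-- The negation permutation of `Fin (n+1)`. -/
def wneg : Equiv.Perm (Fin (n + 1)) where
  toFun x := -x
  invFun x := -x
  left_inv x := neg_neg x
  right_inv x := neg_neg x

theorem wneg_apply (x : Fin (n + 1)) : wneg x = -x := rfl

theorem wneg_mul_self : (wneg : Equiv.Perm (Fin (n + 1))) * wneg = 1 :=
  Equiv.ext fun x => neg_neg x

theorem rot_pow_mul_wneg (m : ℕ) :
    (finRotate (n + 1)) ^ m * wneg
      = wneg * (finRotate (n + 1)) ^ (((-(m : Fin (n + 1))) : Fin (n + 1)) : ℕ) := by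
  ext x
  rw [Equiv.Perm.mul_apply, Equiv.Perm.mul_apply, finRotate_pow_apply, finRotate_pow_apply,
    Fin.cast_val_eq_self, wneg_apply, wneg_apply]
  ring_nf

/-- The right-reversal map on `Sym_n`. -/
def B (π : Equiv.Perm (Fin n)) : Equiv.Perm (Fin n) := canon (ext0 π * wneg)

theorem B_B (π : Equiv.Perm (Fin n)) : B (B π) = π := by
  unfold B
  rw [canon_spec, mul_assoc (ext0 π * wneg), rot_pow_mul_wneg, ← mul_assoc, canon_mul_pow,
    mul_assoc, wneg_mul_self, mul_one, canon_ext0]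

def rEquiv : Equiv.Perm (Equiv.Perm (Fin n)) where
  toFun := B
  invFun := B
  left_inv := B_B
  right_inv := B_B

theorem rEquiv_sq : (rEquiv : Equiv.Perm (Equiv.Perm (Fin n))) ^ 2 = 1 := by
  rw [pow_two]
  exact Equiv.ext fun π => B_B π

theorem A_B_comm (σ : Equiv.Perm (Fin (n + 1))) (π : Equiv.Perm (Fin n)) :
    A σ (B π) = B (A σ π) := by
  unfold A B
  rw [canon_spec (ext0 π * wneg), ← mul_assoc σ, canon_mul_pow,
    canon_spec (σ * ext0 π), mul_assoc (σ * ext0 π), rot_pow_mul_wneg,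
    ← mul_assoc (σ * ext0 π) wneg, canon_mul_pow, ← mul_assoc σ]

def rHom : Multiplicative (ZMod 2) →* Equiv.Perm (Equiv.Perm (Fin n)) where
  toFun x := rEquiv ^ (Multiplicative.toAdd x).val
  map_one' := by
    show rEquiv ^ (Multiplicative.toAdd (1 : Multiplicative (ZMod 2))).val = 1
    rw [toAdd_one, ZMod.val_zero, pow_zero]
  map_mul' x y := by
    show rEquiv ^ (Multiplicative.toAdd (x * y)).val
        = rEquiv ^ (Multiplicative.toAdd x).val * rEquiv ^ (Multiplicative.toAdd y).val
    rw [toAdd_mul, ZMod.val_add, ← pow_eq_pow_mod _ rEquiv_sq, pow_add]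

theorem phi_rHom_comm (σ : Equiv.Perm (Fin (n + 1))) (x : Multiplicative (ZMod 2)) :
    Commute (phi σ) (rHom x) := by
  show Commute (phi σ) (rEquiv ^ (Multiplicative.toAdd x).val)
  apply Commute.pow_right
  exact Equiv.ext fun π => A_B_comm σ π

/-- The full homomorphism `Sym_{n+1} × C₂ →* Perm(Sym_n)`. -/
def psi : Equiv.Perm (Fin (n + 1)) × Multiplicative (ZMod 2) →* Equiv.Perm (Equiv.Perm (Fin n)) :=
  MonoidHom.noncommCoprod phi rHom phi_rHom_comm

theorem psi_apply (σ : Equiv.Perm (Fin (n + 1))) (ε : Multiplicative (ZMod 2)) :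
    psi (σ, ε) = phi σ * rHom ε := rfl

theorem master0 {σ : Equiv.Perm (Fin (n + 1))} (h : phi σ = 1)
    (τ : Equiv.Perm (Fin (n + 1))) (hτ : τ 0 = 0) :
    ∃ b : Fin (n + 1), ∀ x : Fin (n + 1), σ (τ (x + b)) = τ x := by
  have h1 : A σ (unext0 τ hτ) = unext0 τ hτ := by
    have := Equiv.ext_iff.mp h (unext0 τ hτ)
    exact this
  have h2 : canon (σ * τ) = unext0 τ hτ := by
    unfold A at h1
    rwa [ext0_unext0] at h1
  have h3 : σ * τ * finRotate (n + 1) ^ (((σ * τ)⁻¹ 0 : Fin (n + 1)) : ℕ) = τ := by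
    have := congrArg ext0 h2
    rwa [canon_spec, ext0_unext0] at this
  refine ⟨((σ * τ)⁻¹ 0 : Fin (n + 1)), fun x => ?_⟩
  have h4 := Equiv.ext_iff.mp h3 x
  simp only [Equiv.Perm.mul_apply, finRotate_pow_apply, Fin.cast_val_eq_self] at h4
  exact h4

theorem master1 {σ : Equiv.Perm (Fin (n + 1))} (h : phi σ * rEquiv = 1)
    (τ : Equiv.Perm (Fin (n + 1))) (hτ : τ 0 = 0) :
    ∃ b : Fin (n + 1), ∀ x : Fin (n + 1), σ (τ (b - x)) = τ x := by
  have h1 : A σ (B (unext0 τ hτ)) = unext0 τ hτ := by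
    have := Equiv.ext_iff.mp h (unext0 τ hτ)
    exact this
  have h2 : canon (σ * (τ * wneg)) = unext0 τ hτ := by
    unfold A B at h1
    rwa [ext0_unext0, canon_spec, ← mul_assoc σ, canon_mul_pow] at h1
  have h3 : σ * (τ * wneg) * finRotate (n + 1) ^ ((((σ * (τ * wneg) : Equiv.Perm (Fin (n+1))))⁻¹ 0 : Fin (n + 1)) : ℕ)
      = τ := by
    have := congrArg ext0 h2
    rwa [canon_spec, ext0_unext0] at this
  refine ⟨-(((σ * (τ * wneg) : Equiv.Perm (Fin (n+1))))⁻¹ 0 : Fin (n + 1)), fun x => ?_⟩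
  have h4 := Equiv.ext_iff.mp h3 x
  simp only [Equiv.Perm.mul_apply, finRotate_pow_apply, Fin.cast_val_eq_self,
    wneg_apply] at h4
  have h5 : -(((σ * (τ * wneg) : Equiv.Perm (Fin (n+1))))⁻¹ 0 : Fin (n + 1)) - x = -(x + (((σ * (τ * wneg) : Equiv.Perm (Fin (n+1))))⁻¹ 0)) := by
    ring
  rw [h5]
  exact h4

/-- There is an element of `Fin (n+1)` avoiding any three given values, if `n ≥ 3`. -/
theorem exists_avoid (hn : 3 ≤ n) (a b c : Fin (n + 1)) :
    ∃ u : Fin (n + 1), u ≠ a ∧ u ≠ b ∧ u ≠ c := by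
  by_contra hcon
  push_neg at hcon
  have key : ∀ u : Fin (n + 1), u.val = a.val ∨ u.val = b.val ∨ u.val = c.val := by
    intro u
    by_cases h1 : u = a
    · exact Or.inl (by rw [h1])
    by_cases h2 : u = b
    · exact Or.inr (Or.inl (by rw [h2]))
    · exact Or.inr (Or.inr (by rw [hcon u h1 h2]))
  have e0 := key ⟨0, by omega⟩
  have e1 := key ⟨1, by omega⟩
  have e2 := key ⟨2, by omega⟩
  have e3 := key ⟨3, by omega⟩
  simp only [] at e0 e1 e2 e3
  rcases e0 with h|h|h <;> rcases e1 with h'|h'|h' <;> rcases e2 with h''|h''|h'' <;>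
    rcases e3 with h'''|h'''|h''' <;> omega

theorem val_facts {x : Fin (n + 1)} (hx : x ≠ 0) : x.val ≠ 0 := by
  intro h
  exact hx (Fin.ext (by rw [h, Fin.val_zero]))

theorem double_zero {a : Fin (n + 1)} (ha : a + a = 0) (hne : a ≠ 0) :
    a.val + a.val = n + 1 := by
  have hv : (a.val + a.val) % (n + 1) = 0 := by
    have := congrArg Fin.val ha
    rwa [Fin.val_add, Fin.val_zero] at this
  have h1 := a.isLt
  have h2 := val_facts hne
  rcases Nat.lt_or_ge (a.val + a.val) (n + 1) with h | h
  · rw [Nat.mod_eq_of_lt h] at hv; omega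
  · rw [Nat.mod_eq_sub_mod h, Nat.mod_eq_of_lt (by omega)] at hv
    omega

theorem double_unique {a b : Fin (n + 1)} (ha : a + a = 0) (hb : b + b = 0)
    (hnea : a ≠ 0) (hneb : b ≠ 0) : a = b := by
  have h1 := double_zero ha hnea
  have h2 := double_zero hb hneb
  exact Fin.ext (by omega)
theorem sigma_form0 {σ : Equiv.Perm (Fin (n + 1))} (h : phi σ = 1) :
    ∃ b₀ : Fin (n + 1), ∀ y, σ y = y - b₀ := by
  obtain ⟨b₀, hb₀⟩ := master0 h 1 (Equiv.Perm.one_apply 0)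
  refine ⟨b₀, fun y => ?_⟩
  have h1 := hb₀ (y - b₀)
  simp only [Equiv.Perm.one_apply] at h1
  rwa [sub_add_cancel] at h1

theorem phi_eq_one_imp (hn : 3 ≤ n) {σ : Equiv.Perm (Fin (n + 1))} (h : phi σ = 1) :
    σ = 1 := by
  obtain ⟨b₀, hσ⟩ := sigma_form0 h
  have Q : ∀ τ : Equiv.Perm (Fin (n + 1)), τ 0 = 0 →
      ∃ b, τ b = b₀ ∧ ∀ x, τ (x + b) = τ x + b₀ := by
    intro τ hτ
    obtain ⟨b, hb⟩ := master0 h τ hτ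
    have h' : ∀ x, τ (x + b) = τ x + b₀ := by
      intro x
      have h1 := hb x
      rw [hσ] at h1
      rw [← h1]
      ring
    refine ⟨b, ?_, h'⟩
    have h0 := h' 0
    rwa [zero_add, hτ, zero_add] at h0
  have hb0 : b₀ = 0 := by
    by_contra hne
    by_cases h2 : b₀ + b₀ = 0
    · obtain ⟨d, hd0, hdb, -⟩ := exists_avoid hn 0 b₀ b₀
      have hswap0 : Equiv.swap d b₀ 0 = 0 :=
        Equiv.swap_apply_of_ne_of_ne (Ne.symm hd0) (Ne.symm hne)
      obtain ⟨b, hτb, hcond⟩ := Q (Equiv.swap d b₀) hswap0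
      have hbd : b = d := by
        apply (Equiv.swap d b₀).injective
        rw [hτb, Equiv.swap_apply_left]
      rw [hbd] at hcond
      have h3 := hcond d
      rw [Equiv.swap_apply_left] at h3
      have h4 : Equiv.swap d b₀ (d + d) = Equiv.swap d b₀ 0 := by
        rw [h3, h2, hswap0]
      have h5 : d + d = 0 := (Equiv.swap d b₀).injective h4
      exact hdb (double_unique h5 h2 hd0 hne)
    · have hswap0 : Equiv.swap b₀ (b₀ + b₀) 0 = 0 :=
        Equiv.swap_apply_of_ne_of_ne (Ne.symm hne) (Ne.symm h2)
      obtain ⟨b, hτb, hcond⟩ := Q (Equiv.swap b₀ (b₀ + b₀)) hswap0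
      have hbd : b = b₀ + b₀ := by
        apply (Equiv.swap b₀ (b₀ + b₀)).injective
        rw [hτb, Equiv.swap_apply_right]
      rw [hbd] at hcond
      by_cases h3 : b₀ + b₀ + b₀ = 0
      · obtain ⟨u, hu0, hub, hut⟩ := exists_avoid hn 0 b₀ (b₀ + b₀)
        have h4 := hcond u
        rw [Equiv.swap_apply_of_ne_of_ne hub hut] at h4
        have harg1 : u + (b₀ + b₀) ≠ b₀ := fun he => hut (by linear_combination he - h3)
        have harg2 : u + (b₀ + b₀) ≠ b₀ + b₀ := fun he => hu0 (by linear_combination he)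
        rw [Equiv.swap_apply_of_ne_of_ne harg1 harg2] at h4
        exact hne (by linear_combination h4)
      · have h4 := hcond (b₀ + b₀)
        rw [Equiv.swap_apply_right] at h4
        have harg1 : b₀ + b₀ + (b₀ + b₀) ≠ b₀ := fun he => h3 (by linear_combination he)
        have harg2 : b₀ + b₀ + (b₀ + b₀) ≠ b₀ + b₀ := fun he => h2 (by linear_combination he)
        rw [Equiv.swap_apply_of_ne_of_ne harg1 harg2] at h4
        exact h2 (by linear_combination h4)
  apply Equiv.ext
  intro y
  rw [hσ, hb0, sub_zero]
  exact (Equiv.Perm.one_apply y).symm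

theorem sigma_form1 {σ : Equiv.Perm (Fin (n + 1))} (h : phi σ * rEquiv = 1) :
    ∃ b₀ : Fin (n + 1), ∀ y, σ y = b₀ - y := by
  obtain ⟨b₀, hb₀⟩ := master1 h 1 (Equiv.Perm.one_apply 0)
  refine ⟨b₀, fun y => ?_⟩
  have h1 := hb₀ (b₀ - y)
  simp only [Equiv.Perm.one_apply] at h1
  rwa [sub_sub_cancel] at h1

theorem not_phi_rEquiv_eq_one (hn : 3 ≤ n) (σ : Equiv.Perm (Fin (n + 1))) :
    phi σ * rEquiv ≠ 1 := by
  intro h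
  obtain ⟨b₀, hσ⟩ := sigma_form1 h
  have P : ∀ τ : Equiv.Perm (Fin (n + 1)), τ 0 = 0 →
      ∃ b, τ b = b₀ ∧ ∀ x, τ (b - x) = b₀ - τ x := by
    intro τ hτ
    obtain ⟨b, hb⟩ := master1 h τ hτ
    have h' : ∀ x, τ (b - x) = b₀ - τ x := by
      intro x
      have h1 := hb x
      rw [hσ] at h1
      linear_combination -h1
    refine ⟨b, ?_, h'⟩
    have h0 := h' 0
    rwa [sub_zero, hτ, sub_zero] at h0
  by_cases hz : b₀ = 0
  · subst hz
    have hone : (1 : Fin (n + 1)) ≠ 0 := by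
      intro he
      have hv := congrArg Fin.val he
      rw [Fin.val_one', Fin.val_zero, Nat.mod_eq_of_lt (by omega)] at hv
      omega
    obtain ⟨u, hu0, hu1, hun⟩ := exists_avoid hn 0 1 (-1)
    have hswap0 : Equiv.swap 1 u 0 = 0 :=
      Equiv.swap_apply_of_ne_of_ne (Ne.symm hone) (Ne.symm hu0)
    obtain ⟨b, hτb, hcond⟩ := P (Equiv.swap 1 u) hswap0
    have hb : b = 0 := by
      apply (Equiv.swap 1 u).injective
      rw [hτb, hswap0]
    rw [hb] at hcond
    have h4 := hcond 1
    rw [Equiv.swap_apply_left] at h4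
    have hm1 : (0 : Fin (n + 1)) - 1 = -1 := by ring
    rw [hm1] at h4
    have harg1 : (-1 : Fin (n + 1)) ≠ 1 := by
      intro he
      have h2 : (1 : Fin (n + 1)) + 1 = 0 := by linear_combination -he
      have hv := congrArg Fin.val h2
      rw [Fin.val_add, Fin.val_one', Fin.val_zero, Nat.mod_eq_of_lt (show 1 < n + 1 by omega),
        Nat.mod_eq_of_lt (by omega)] at hv
      omega
    rw [Equiv.swap_apply_of_ne_of_ne harg1 (Ne.symm hun)] at h4
    exact hu1 (by linear_combination h4)
  · by_cases h2 : b₀ + b₀ = 0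
    · obtain ⟨d, hd0, hdb, -⟩ := exists_avoid hn 0 b₀ b₀
      have hswap0 : Equiv.swap d b₀ 0 = 0 :=
        Equiv.swap_apply_of_ne_of_ne (Ne.symm hd0) (Ne.symm hz)
      obtain ⟨b, hτb, hcond⟩ := P (Equiv.swap d b₀) hswap0
      have hb : b = d := by
        apply (Equiv.swap d b₀).injective
        rw [hτb, Equiv.swap_apply_left]
      rw [hb] at hcond
      have h4 := hcond (d + b₀)
      have harg : d - (d + b₀) = b₀ := by linear_combination -h2
      rw [harg, Equiv.swap_apply_right] at h4
      have harg1 : d + b₀ ≠ d := fun he => hz (by linear_combination he)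
      have harg2 : d + b₀ ≠ b₀ := fun he => hd0 (by linear_combination he)
      rw [Equiv.swap_apply_of_ne_of_ne harg1 harg2] at h4
      have hdd : d + d = 0 := by linear_combination h4
      exact hdb (double_unique hdd h2 hd0 hz)
    · have hswap0 : Equiv.swap b₀ (b₀ + b₀) 0 = 0 :=
        Equiv.swap_apply_of_ne_of_ne (Ne.symm hz) (Ne.symm h2)
      obtain ⟨b, hτb, hcond⟩ := P (Equiv.swap b₀ (b₀ + b₀)) hswap0
      have hb : b = b₀ + b₀ := by
        apply (Equiv.swap b₀ (b₀ + b₀)).injective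
        rw [hτb, Equiv.swap_apply_right]
      rw [hb] at hcond
      obtain ⟨u, hu0, hub, hut⟩ := exists_avoid hn 0 b₀ (b₀ + b₀)
      have h4 := hcond u
      rw [Equiv.swap_apply_of_ne_of_ne hub hut] at h4
      have harg1 : b₀ + b₀ - u ≠ b₀ := fun he => hub (by linear_combination -he)
      have harg2 : b₀ + b₀ - u ≠ b₀ + b₀ := fun he => hu0 (by linear_combination -he)
      rw [Equiv.swap_apply_of_ne_of_ne harg1 harg2] at h4
      exact hz (by linear_combination h4)

theorem psi_injective (hn : 3 ≤ n) :
    Function.Injective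
      (psi : Equiv.Perm (Fin (n + 1)) × Multiplicative (ZMod 2) →* _) := by
  rw [injective_iff_map_eq_one]
  rintro ⟨σ, ε⟩ h
  rw [psi_apply] at h
  have hval := ZMod.val_lt (Multiplicative.toAdd ε)
  have hR : rHom (n := n) ε = rEquiv ^ (Multiplicative.toAdd ε).val := rfl
  have hv : (Multiplicative.toAdd ε).val = 0 ∨ (Multiplicative.toAdd ε).val = 1 := by omega
  rcases hv with hv | hv
  · have hφ : phi σ = 1 := by rwa [hR, hv, pow_zero, mul_one] at h
    have hσ : σ = 1 := phi_eq_one_imp hn hφ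
    have hε : ε = 1 := by
      have h0 : Multiplicative.toAdd ε = 0 := by rw [← ZMod.val_eq_zero]; exact hv
      calc ε = Multiplicative.ofAdd (Multiplicative.toAdd ε) := rfl
        _ = 1 := by rw [h0]; rfl
    rw [hσ, hε]
    rfl
  · exfalso
    apply not_phi_rEquiv_eq_one hn σ
    rwa [hR, hv, pow_one] at h
theorem rot_natCast : ((n : ℕ) : Fin (n + 1)) = -1 := by
  have h : ((n : ℕ) : Fin (n + 1)) + 1 = 0 := by
    have h2 : ((n + 1 : ℕ) : Fin (n + 1)) = 0 := Fin.natCast_self _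
    rwa [Nat.cast_add, Nat.cast_one] at h2
  linear_combination h

theorem phi_ext0 (h : Equiv.Perm (Fin n)) : phi (ext0 h) = Equiv.mulLeft h := by
  apply Equiv.ext
  intro π
  show A (ext0 h) π = Equiv.mulLeft h π
  unfold A
  rw [← ext0_mul, canon_ext0]
  rfl

theorem toricEquiv_eq (hn1 : 1 ≤ n) :
    toricEquiv n hn1 = phi (finRotate (n + 1) ^ n) := by
  apply Equiv.ext
  intro π
  show toricMap n 1 hn1 π = A (finRotate (n + 1) ^ n) π
  unfold toricMap A canon
  apply unext0_congr
  unfold toricAux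
  have e1 : n + 1 - 1 = n := by omega
  have e2 : (((finRotate (n + 1) ^ n * ext0 π : Equiv.Perm (Fin (n + 1))))⁻¹ 0 : Fin (n + 1))
      = (ext0 π)⁻¹ ((1 : ℕ) : Fin (n + 1)) := by
    rw [mul_inv_rev, Equiv.Perm.mul_apply, rot_pow_inv_apply]
    congr 1
    rw [Nat.cast_one, zero_sub, rot_natCast]
    ring
  rw [e1, e2]

theorem toric_mem (hn1 : 1 ≤ n) : toricEquiv n hn1 ∈ toricReverseGroup n hn1 :=
  Subgroup.subset_closure (Set.mem_insert _ _)

theorem rev_mem (hn1 : 1 ≤ n) : revEquiv n ∈ toricReverseGroup n hn1 :=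
  Subgroup.subset_closure (Set.mem_insert_of_mem _ rfl)

theorem phi_rot_mem (hn1 : 1 ≤ n) :
    phi (finRotate (n + 1)) ∈ toricReverseGroup n hn1 := by
  have h1 : phi (finRotate (n + 1)) = (toricEquiv n hn1) ^ n := by
    rw [toricEquiv_eq hn1, ← map_pow, ← pow_mul]
    congr 1
    calc finRotate (n + 1) = finRotate (n + 1) ^ 1 := (pow_one _).symm
      _ = finRotate (n + 1) ^ (n * n) := pow_rot_eq (by
          rw [Nat.cast_one, Nat.cast_mul, rot_natCast]; ring)
  rw [h1]
  exact pow_mem (toric_mem hn1) n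

theorem phi_rot_pow_mem (hn1 : 1 ≤ n) (m : ℕ) :
    phi (finRotate (n + 1) ^ m) ∈ toricReverseGroup n hn1 := by
  rw [map_pow]
  exact pow_mem (phi_rot_mem hn1) m

theorem ext0_wrev : ext0 (wrev n) = wneg := by
  apply Equiv.ext
  intro x
  cases x using Fin.cases with
  | zero => rw [ext0_zero, wneg_apply, neg_zero]
  | succ t =>
      rw [ext0_apply_succ, wneg_apply]
      have ht := t.isLt
      apply Fin.ext
      rw [Fin.val_succ]
      have h1 : (-(t.succ) : Fin (n + 1)) = 0 - t.succ := by rw [zero_sub]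
      rw [h1, Fin.sub_def]
      show (n - 1 - t.val) + 1 = (n + 1 - (t.val + 1) + 0) % (n + 1)
      rw [Nat.mod_eq_of_lt (by omega)]
      omega

theorem revEquiv_eq : revEquiv n = phi wneg * rEquiv := by
  apply Equiv.ext
  intro π
  show revMap π = A wneg (B π)
  unfold A B
  rw [canon_spec, ← mul_assoc wneg, canon_mul_pow]
  have hfix : ((wneg * (ext0 π * wneg) : Equiv.Perm (Fin (n + 1)))) 0 = 0 := by
    rw [Equiv.Perm.mul_apply, Equiv.Perm.mul_apply]
    rw [show (wneg (0 : Fin (n + 1))) = 0 from neg_zero, ext0_zero]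
    exact neg_zero
  rw [canon_fix0 _ hfix]
  apply ext0_injective
  rw [ext0_unext0]
  show ext0 (wrev n * π * wrev n) = wneg * (ext0 π * wneg)
  rw [ext0_mul, ext0_mul, ext0_wrev, mul_assoc]

theorem rEquiv_eq : (rEquiv : Equiv.Perm (Equiv.Perm (Fin n))) = phi wneg * revEquiv n := by
  rw [revEquiv_eq, ← mul_assoc, ← map_mul, wneg_mul_self, map_one, one_mul]

theorem phi_decomp (hn1 : 1 ≤ n) (σ : Equiv.Perm (Fin (n + 1))) :
    ∃ h d, d ∈ toricReverseGroup n hn1 ∧ phi σ = Equiv.mulLeft h * d :=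
  ⟨canon σ, (phi (finRotate (n + 1) ^ ((σ⁻¹ 0 : Fin (n + 1)) : ℕ)))⁻¹,
    inv_mem (phi_rot_pow_mem hn1 _), by
      rw [← phi_ext0, canon_spec, map_mul, mul_inv_cancel_right]⟩

theorem mem_psi_range_iff (hn1 : 1 ≤ n) (e : Equiv.Perm (Equiv.Perm (Fin n))) :
    e ∈ MonoidHom.range (psi : _ →* Equiv.Perm (Equiv.Perm (Fin n))) ↔
      ∃ h d, d ∈ toricReverseGroup n hn1 ∧ e = Equiv.mulLeft h * d := by
  constructor
  · rintro ⟨⟨σ, ε⟩, rfl⟩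
    have hR : psi (σ, ε) = phi σ * rEquiv ^ (Multiplicative.toAdd ε).val := rfl
    have hval := ZMod.val_lt (Multiplicative.toAdd ε)
    have hv : (Multiplicative.toAdd ε).val = 0 ∨ (Multiplicative.toAdd ε).val = 1 := by omega
    rcases hv with hv | hv
    · obtain ⟨h, d, hd, hphi⟩ := phi_decomp hn1 σ
      exact ⟨h, d, hd, by rw [hR, hv, pow_zero, mul_one, hphi]⟩
    · obtain ⟨h, d, hd, hphi⟩ := phi_decomp hn1 (σ * wneg)
      refine ⟨h, d * revEquiv n, mul_mem hd (rev_mem hn1), ?_⟩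
      rw [hR, hv, pow_one, rEquiv_eq, ← mul_assoc, ← map_mul, hphi, mul_assoc]
  · rintro ⟨h, d, hd, rfl⟩
    have h1 : Equiv.mulLeft h ∈ MonoidHom.range (psi (n := n)) := by
      refine ⟨(ext0 h, 1), ?_⟩
      rw [psi_apply, map_one, mul_one, phi_ext0]
    have h2 : toricReverseGroup n hn1 ≤ MonoidHom.range (psi (n := n)) := by
      rw [toricReverseGroup, Subgroup.closure_le]
      intro x hx
      simp only [Set.mem_insert_iff, Set.mem_singleton_iff] at hx
      rw [SetLike.mem_coe]
      rcases hx with rfl | rfl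
      · exact ⟨(finRotate (n + 1) ^ n, 1), by
          rw [psi_apply, map_one, mul_one, ← toricEquiv_eq hn1]⟩
      · refine ⟨(wneg, Multiplicative.ofAdd 1), ?_⟩
        have hRR : rHom (n := n) (Multiplicative.ofAdd 1) = rEquiv := by
          show rEquiv ^ (Multiplicative.toAdd (Multiplicative.ofAdd (1 : ZMod 2))).val = rEquiv
          have hv1 : (Multiplicative.toAdd (Multiplicative.ofAdd (1 : ZMod 2))).val = 1 := by
            decide
          rw [hv1, pow_one]
        rw [psi_apply, hRR, ← revEquiv_eq]
    exact mul_mem h1 (h2 hd)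

end Stmt9Aux

/-- For `n ≥ 3`, the set `{L_h ∘ d : h ∈ Sym_n, d ∈ D_{n+1}}` is a
subgroup of the symmetric group on the set `Sym_n`, isomorphic to the direct product
of `Sym_{n+1}` by a cyclic group of order `2`. -/
theorem stmt_9 (n : ℕ) (hn : 3 ≤ n) :
    ∃ H : Subgroup (Equiv.Perm (Equiv.Perm (Fin n))),
      ((H : Set (Equiv.Perm (Equiv.Perm (Fin n))))
          = {e | ∃ (h : Equiv.Perm (Fin n)) (d : Equiv.Perm (Equiv.Perm (Fin n))),
              d ∈ toricReverseGroup n (by omega) ∧ e = Equiv.mulLeft h * d}) ∧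
      Nonempty (H ≃* Equiv.Perm (Fin (n + 1)) × Multiplicative (ZMod 2)) := by
  have hn1 : 1 ≤ n := by omega
  refine ⟨(Stmt9Aux.psi (n := n)).range, ?_,
    ⟨(MonoidHom.ofInjective (Stmt9Aux.psi_injective hn)).symm⟩⟩
  ext e
  rw [SetLike.mem_coe, Stmt9Aux.mem_psi_range_iff hn1]
  exact Iff.rfl
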